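/- Any minimal subset B ⊆ V \ {X} such that Y is conditionally dependent on X given B (where X is a relevant variable) contains only relevant variables; that is, every variable X' ∈ B is relevant (there exists some set B' ⊆ V with Y not independent of X' given B'). -/
import Mathlib


/-- Any minimal subset `B ⊆ V \ {X}` such that `Y ⫫̸ X | B` (for a relevant
variable `X`) contains only relevant variables.  Here the variables together with the
output `y` are indexed by a finite type `ι`, `V = univ \ {y}`, and `CI S T R` abstractly
denotes the conditional-independence statement `S ⫫ T | R`, assumed to satisfy the
semi-graphoid axioms (symmetry, decomposition, weak union, contraction). -/
theorem minimal_conditioning_contains_only_relevant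
    {ι : Type*} [Fintype ι] [DecidableEq ι]
    (CI : Finset ι → Finset ι → Finset ι → Prop)
    (symm : ∀ S T R, CI S T R → CI T S R)
    (decomp : ∀ S T U R, CI S (T ∪ U) R → CI S T R)
    (weakUnion : ∀ S T U R, CI S (T ∪ U) R → CI S T (R ∪ U))
    (contraction : ∀ S T U R, CI S T R → CI S U (R ∪ T) → CI S (T ∪ U) R)
    (y X : ι) (hXy : X ≠ y)
    (B : Finset ι) (hB : B ⊆ (Finset.univ.erase y).erase X)
    (hdep : ¬ CI {y} {X} B)
    (hmin : ∀ B' ⊂ B, CI {y} {X} B') :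
    ∀ X' ∈ B, ∃ B' ⊆ (Finset.univ.erase y).erase X', ¬ CI {y} {X'} B' := by
  intro X' hX'
  have hX'B := hB hX'
  have hX'ne : X' ≠ X := (Finset.mem_erase.mp hX'B).1
  have hX'ney : X' ≠ y := (Finset.mem_erase.mp (Finset.mem_of_mem_erase hX'B)).1
  set B₀ := B.erase X' with hB₀
  refine ⟨B₀ ∪ {X}, ?_, ?_⟩
  · intro z hz
    rcases Finset.mem_union.mp hz with hz | hz
    · have hzB : z ∈ B := Finset.mem_of_mem_erase hz
      have hzX' : z ≠ X' := (Finset.mem_erase.mp hz).1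
      have hzy : z ≠ y := (Finset.mem_erase.mp (Finset.mem_of_mem_erase (hB hzB))).1
      simp [Finset.mem_erase, hzX', hzy]
    · have : z = X := Finset.mem_singleton.mp hz
      subst this
      simp [Finset.mem_erase, hX'ne.symm, hXy]
  · intro hCI
    have h1 : CI {y} {X} B₀ := hmin B₀ (Finset.erase_ssubset hX')
    have h2 : CI {y} ({X} ∪ {X'}) B₀ := contraction _ _ _ _ h1 hCI
    have h3 : CI {y} {X} (B₀ ∪ {X'}) := weakUnion _ _ _ _ h2
    have hBe : B₀ ∪ {X'} = B := by
      rw [hB₀, Finset.union_comm]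
      simpa using Finset.insert_erase hX'
    rw [hBe] at h3
    exact hdep h3
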